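/- Let A be a finite-dimensional algebra over an algebraically closed field K such that λ ↦ λ' is an involution on Λ₀, and suppose there exists a symmetrizing form τ on B = End_A(⊕_{λ∈Λ₀} P^λ) with τ(θ_λ) = 1 for all λ ∈ Λ₀. Then for any nonzero f ∈ Hom_A(P^λ, P^μ) with λ, μ ∈ Λ₀, there exists g ∈ Hom_A(P^μ, P^λ) such that f∘g = θ_μ and g∘f = θ_λ. -/
import Mathlib

set_option linter.unusedSectionVars false
set_option maxHeartbeats 1000000

/-- The socle of a module: the largest semisimple submodule. -/
def Socle (A M : Type) [Ring A] [AddCommGroup M] [Module A M] : Submodule A M :=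
  ⨆ (p : Submodule A M) (_ : IsSimpleModule A ↥p), p

/-- The radical of a module: the intersection of all maximal submodules. -/
def Rad (A M : Type) [Ring A] [AddCommGroup M] [Module A M] : Submodule A M :=
  sInf {p : Submodule A M | IsCoatom p}

/-- The canonical embedding of `Hom_A(P^λ, P^μ)` into `End_A(⊕ P^λ)`. -/
noncomputable def emb (A : Type) [Ring A] (ι : Type) [DecidableEq ι]
    (P : ι → Type) [∀ i, AddCommGroup (P i)] [∀ i, Module A (P i)]
    (l m : ι) (f : P l →ₗ[A] P m) : Module.End A (DirectSum ι P) :=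
  (DirectSum.lof A ι P m).comp (f.comp (DirectSum.component A ι P l))

section Helpers

variable {K A : Type} [Field K] [Ring A] [Algebra K A]

/-- A-linear maps between K-A-tower modules are K-equivariant. -/
lemma stmt4_asmul {M N : Type} [AddCommGroup M] [AddCommGroup N] [Module A M] [Module A N]
    [Module K M] [Module K N] [IsScalarTower K A M] [IsScalarTower K A N]
    (h : M →ₗ[A] N) (c : K) (v : M) : h (c • v) = c • h v := by
  rw [← algebraMap_smul A c v, map_smul, algebraMap_smul]

lemma stmt4_comp_ksmul {M N O : Type} [AddCommGroup M] [AddCommGroup N] [AddCommGroup O]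
    [Module A M] [Module A N] [Module A O]
    [Module K N] [Module K O] [IsScalarTower K A N] [IsScalarTower K A O]
    [SMulCommClass A K N] [SMulCommClass A K O]
    (h : N →ₗ[A] O) (c : K) (g : M →ₗ[A] N) : h ∘ₗ (c • g) = c • (h ∘ₗ g) := by
  ext v
  simp only [LinearMap.comp_apply, LinearMap.smul_apply]
  exact stmt4_asmul h c (g v)

lemma stmt4_findim_hom (K : Type) [Field K] {A M N : Type} [Ring A] [Algebra K A]
    [AddCommGroup M] [AddCommGroup N] [Module A M] [Module A N]
    [Module K M] [Module K N] [IsScalarTower K A M] [IsScalarTower K A N]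
    [SMulCommClass A K N] [FiniteDimensional K M] [FiniteDimensional K N] :
    FiniteDimensional K (M →ₗ[A] N) :=
  FiniteDimensional.of_injective
    (LinearMap.restrictScalarsₗ K A M N K)
    (LinearMap.restrictScalars_injective K)

variable {ι : Type} [DecidableEq ι] {P : ι → Type}
  [∀ i, AddCommGroup (P i)] [∀ i, Module A (P i)] [∀ i, Module K (P i)]
  [∀ i, IsScalarTower K A (P i)] [∀ i, SMulCommClass A K (P i)]

lemma stmt4_emb_mul (l m k : ι) (u : P l →ₗ[A] P m) (v : P k →ₗ[A] P l) :
    emb A ι P l m u * emb A ι P k l v = emb A ι P k m (u ∘ₗ v) := by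
  apply LinearMap.ext
  intro x
  simp [emb, Module.End.mul_apply, DirectSum.component.lof_self]

lemma stmt4_emb_ne_zero (l m : ι) (u : P l →ₗ[A] P m) (hu : u ≠ 0) : emb A ι P l m u ≠ 0 := by
  intro h
  apply hu
  ext v
  have := congrArg (fun z => DirectSum.component A ι P m (z (DirectSum.lof A ι P l v))) h
  simpa [emb, DirectSum.component.lof_self] using this

lemma stmt4_emb_add (l m : ι) (u v : P l →ₗ[A] P m) :
    emb A ι P l m (u + v) = emb A ι P l m u + emb A ι P l m v := by
  ext x
  simp [emb]

lemma stmt4_emb_smul (l m : ι) (c : K) (u : P l →ₗ[A] P m) :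
    emb A ι P l m (c • u) = c • emb A ι P l m u := by
  apply LinearMap.ext
  intro x
  simp only [emb, LinearMap.comp_apply, LinearMap.smul_apply]
  exact stmt4_asmul (DirectSum.lof A ι P m) c _

lemma stmt4_emb_zero (l m : ι) : emb A ι P l m 0 = 0 := by
  ext x
  simp [emb]

variable (τ : Module.End A (DirectSum ι P) →ₗ[K] K)
  (hsymm : ∀ x y, τ (x * y) = τ (y * x))

include hsymm in
lemma stmt4_tau_cyclic (a b : ι) (u : P a →ₗ[A] P b) (v : P b →ₗ[A] P a) :
    τ (emb A ι P b b (u ∘ₗ v)) = τ (emb A ι P a a (v ∘ₗ u)) := by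
  rw [← stmt4_emb_mul, ← stmt4_emb_mul, hsymm]

include hsymm in
lemma stmt4_tau_nondeg (hnd : ∀ x, x ≠ 0 → ∃ y, τ (x * y) ≠ 0)
    (a b : ι) (u : P a →ₗ[A] P b) (hu : u ≠ 0) :
    ∃ v : P b →ₗ[A] P a, τ (emb A ι P b b (u ∘ₗ v)) ≠ 0 := by
  obtain ⟨y, hy⟩ := hnd _ (stmt4_emb_ne_zero a b u hu)
  refine ⟨(DirectSum.component A ι P a) ∘ₗ (y ∘ₗ DirectSum.lof A ι P b), ?_⟩
  have key : emb A ι P b b (u ∘ₗ ((DirectSum.component A ι P a) ∘ₗ (y ∘ₗ DirectSum.lof A ι P b)))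
      = (emb A ι P a b u * y) * emb A ι P b b LinearMap.id := by
    apply LinearMap.ext
    intro x
    simp [emb, Module.End.mul_apply, DirectSum.component.lof_self]
  have key2 : emb A ι P b b LinearMap.id * (emb A ι P a b u * y) = emb A ι P a b u * y := by
    apply LinearMap.ext
    intro x
    simp [emb, Module.End.mul_apply, DirectSum.component.lof_self]
  rw [key, hsymm, key2]
  exact hy

end Helpers

section Struct
variable (K : Type) {A : Type} [Field K] [Ring A] [Algebra K A]
variable {M : Type} [AddCommGroup M] [Module A M] [Module K M] [IsScalarTower K A M]
  [FiniteDimensional K M]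
include K

lemma stmt4_proper_le_rad (hco : IsCoatom (Rad A M)) {N : Submodule A M} (hN : N ≠ ⊤) :
    N ≤ Rad A M := by
  have hnoe : IsNoetherian A M := isNoetherian_of_tower K inferInstance
  have hcoat : IsCoatomic (Submodule A M) :=
    CompleteLattice.coatomic_of_top_compact
      ((Submodule.fg_iff_compact _).mp (IsNoetherian.noetherian ⊤))
  rcases eq_top_or_exists_le_coatom N with h | ⟨m, hm, hle⟩
  · exact absurd h hN
  · have h1 : Rad A M ≤ m := sInf_le hm
    rcases eq_or_lt_of_le h1 with h | h
    · exact h ▸ hle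
    · exact absurd (hco.2 _ h) hm.1

lemma stmt4_rad_coatom {L : Type} [AddCommGroup L] [Module A L] [IsSimpleModule A L]
    (π : M →ₗ[A] L) (hs : Function.Surjective π) (hk : LinearMap.ker π = Rad A M) :
    IsCoatom (Rad A M) := by
  rw [← hk, ← isSimpleModule_iff_isCoatom]
  exact IsSimpleModule.congr (π.quotKerEquivOfSurjective hs)

lemma stmt4_ker_theta_eq_rad (hco : IsCoatom (Rad A M)) (θM : Module.End A M)
    (hsimp : IsSimpleModule A ↥(LinearMap.range θM)) :
    LinearMap.ker θM = Rad A M := by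
  have h1 : IsCoatom (LinearMap.ker θM) := by
    rw [← isSimpleModule_iff_isCoatom]
    exact IsSimpleModule.congr θM.quotKerEquivRange
  exact le_antisymm (stmt4_proper_le_rad K hco h1.1) (sInf_le h1)

lemma stmt4_theta_comp_eq_zero (hco : IsCoatom (Rad A M)) (θM : Module.End A M)
    (hker : LinearMap.ker θM = Rad A M) (j : Module.End A M)
    (hj : ¬ Function.Surjective j) : θM ∘ₗ j = 0 := by
  have hr : LinearMap.range j ≤ Rad A M :=
    stmt4_proper_le_rad K hco (fun h => hj (LinearMap.range_eq_top.mp h))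
  ext x
  have : j x ∈ LinearMap.ker θM := by
    rw [hker]; exact hr (LinearMap.mem_range_self j x)
  simpa using this

lemma stmt4_nilpotent_of_not_surj (hco : IsCoatom (Rad A M)) (a : Module.End A M)
    (ha : ¬ Function.Surjective a) : ∃ n, a ^ n = 0 := by
  have hart : IsArtinian A M := isArtinian_of_tower K inferInstance
  have mono : ∀ {n m : ℕ}, n ≤ m → LinearMap.range (a ^ m) ≤ LinearMap.range (a ^ n) := by
    intro n m h
    obtain ⟨k, rfl⟩ := Nat.exists_eq_add_of_le h
    rw [pow_add, Module.End.mul_eq_comp]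
    exact LinearMap.range_comp_le_range _ _
  obtain ⟨n0, hn0⟩ := IsArtinian.monotone_stabilizes
    (⟨fun n => LinearMap.range (a ^ n), fun _ _ h => mono h⟩ : ℕ →o (Submodule A M)ᵒᵈ)
  set n := n0 + 1 with hn
  by_cases h0 : a ^ n = 0
  · exact ⟨n, h0⟩
  exfalso
  have hker : LinearMap.ker (a ^ n) ≤ Rad A M := by
    apply stmt4_proper_le_rad K hco
    intro h
    exact h0 (LinearMap.ker_eq_top.mp h)
  have hra : LinearMap.range a ≤ Rad A M :=
    stmt4_proper_le_rad K hco (N := LinearMap.range a) (by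
      intro h
      exact ha (LinearMap.range_eq_top.mp h))
  have hrange : LinearMap.range (a ^ n) ≤ Rad A M := by
    refine le_trans ?_ hra
    rw [hn, pow_succ', Module.End.mul_eq_comp]
    exact LinearMap.range_comp_le_range (a ^ n0) a
  have hstab : LinearMap.range (a ^ n) = LinearMap.range (a ^ (n + n)) := by
    have e1 := hn0 n (by omega)
    have e2 := hn0 (n + n) (by omega)
    exact (congrArg OrderDual.ofDual e1).symm.trans (congrArg OrderDual.ofDual e2)
  have htop : (⊤ : Submodule A M) ≤ LinearMap.range (a ^ n) ⊔ LinearMap.ker (a ^ n) := by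
    intro x _
    have hx : (a ^ n) x ∈ LinearMap.range (a ^ (n + n)) := by
      rw [← hstab]; exact LinearMap.mem_range_self _ x
    obtain ⟨y, hy⟩ := hx
    rw [pow_add, Module.End.mul_apply] at hy
    refine Submodule.mem_sup.mpr ⟨(a ^ n) y, LinearMap.mem_range_self _ y,
      x - (a ^ n) y, ?_, by abel⟩
    rw [LinearMap.mem_ker, map_sub, hy, sub_self]
  exact hco.1 (top_le_iff.mp (le_trans htop (sup_le hrange hker)))

lemma stmt4_exists_scalar_part [IsAlgClosed K] [Nontrivial M] [SMulCommClass A K M]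
    (x : Module.End A M) :
    ∃ c : K, ¬ Function.Surjective (x - c • (1 : Module.End A M)) := by
  obtain ⟨c, hc⟩ := Module.End.exists_eigenvalue (K := K) (x.restrictScalars K)
  obtain ⟨v, hv⟩ := hc.exists_hasEigenvector
  refine ⟨c, fun hsurj => ?_⟩
  have hker : (x - c • (1 : Module.End A M)) v = 0 := by
    have h1 := hv.apply_eq_smul
    simp only [LinearMap.restrictScalars_apply] at h1
    simp [h1]
  have hKsurj : Function.Surjective ((x - c • (1 : Module.End A M)).restrictScalars K) := hsurj
  have hinj := (LinearMap.injective_iff_surjective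
    (f := (x - c • (1 : Module.End A M)).restrictScalars K)).mpr hKsurj
  exact hv.2 (hinj (a₂ := 0) (by simpa using hker))

end Struct

section Binom
variable (K : Type) {A : Type} [Field K] [Ring A] [Algebra K A]
variable {M N : Type} [AddCommGroup M] [AddCommGroup N] [Module A M] [Module A N]
  [Module K M] [Module K N] [IsScalarTower K A M] [IsScalarTower K A N]
  [SMulCommClass A K M] [SMulCommClass A K N]
include K

/-- If `f = a ∘ f + f ∘ b` with `a, b` nilpotent, then `f = 0`. -/
lemma stmt4_eq_zero_of_sandwich (a : Module.End A N) (b : Module.End A M) (f : M →ₗ[A] N)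
    (hab : f = a ∘ₗ f + f ∘ₗ b) (p q : ℕ) (hp : a ^ p = 0) (hq : b ^ q = 0) : f = 0 := by
  classical
  let La : Module.End K (M →ₗ[A] N) :=
    { toFun := fun g => a ∘ₗ g
      map_add' := fun g h => LinearMap.comp_add g h a
      map_smul' := fun c g => by
        ext v
        simp only [LinearMap.comp_apply, LinearMap.smul_apply, RingHom.id_apply]
        exact stmt4_asmul a c (g v) }
  let Rb : Module.End K (M →ₗ[A] N) :=
    { toFun := fun g => g ∘ₗ b
      map_add' := fun g h => rfl
      map_smul' := fun c g => rfl }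
  have hcomm : Commute La Rb := by
    apply LinearMap.ext
    intro g
    show a ∘ₗ (g ∘ₗ b) = (a ∘ₗ g) ∘ₗ b
    rw [LinearMap.comp_assoc]
  have hLa : ∀ (k : ℕ) (g : M →ₗ[A] N), (La ^ k) g = (a ^ k) ∘ₗ g := by
    intro k
    induction k with
    | zero => intro g; simp [Module.End.one_eq_id]
    | succ k ih =>
      intro g
      rw [pow_succ, Module.End.mul_apply, ih (La g)]
      show (a ^ k) ∘ₗ (a ∘ₗ g) = (a ^ (k + 1)) ∘ₗ g
      rw [← LinearMap.comp_assoc, ← Module.End.mul_eq_comp, ← pow_succ]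
  have hRb : ∀ (k : ℕ) (g : M →ₗ[A] N), (Rb ^ k) g = g ∘ₗ (b ^ k) := by
    intro k
    induction k with
    | zero => intro g; simp [Module.End.one_eq_id]
    | succ k ih =>
      intro g
      rw [pow_succ, Module.End.mul_apply, ih (Rb g)]
      show (g ∘ₗ b) ∘ₗ (b ^ k) = g ∘ₗ (b ^ (k + 1))
      rw [LinearMap.comp_assoc, ← Module.End.mul_eq_comp, ← pow_succ']
  have hfix : ∀ n : ℕ, ((La + Rb) ^ n) f = f := by
    intro n
    induction n with
    | zero => simp
    | succ n ih =>
      rw [pow_succ, Module.End.mul_apply]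
      have h1 : (La + Rb) f = f := by
        show a ∘ₗ f + f ∘ₗ b = f
        exact hab.symm
      rw [h1, ih]
  have key := hfix (p + q)
  rw [hcomm.add_pow] at key
  rw [LinearMap.sum_apply] at key
  have hzero : ∀ k ∈ Finset.range (p + q + 1),
      (La ^ k * Rb ^ (p + q - k) * (((p + q).choose k : ℕ) : Module.End K (M →ₗ[A] N))) f = 0 := by
    intro k _
    rw [Module.End.mul_apply, Module.End.mul_apply, Module.End.natCast_apply]
    rcases le_or_gt p k with h | h
    · rw [hRb, hLa]
      have : a ^ k = 0 := by
        obtain ⟨j, rfl⟩ := Nat.exists_eq_add_of_le h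
        rw [pow_add, hp, zero_mul]
      rw [this, LinearMap.zero_comp]
    · have hq' : b ^ (p + q - k) = 0 := by
        have : q ≤ p + q - k := by omega
        obtain ⟨j, hj⟩ := Nat.exists_eq_add_of_le this
        rw [hj, pow_add, hq, zero_mul]
      rw [hRb, hq', LinearMap.comp_zero, map_zero]
  rw [Finset.sum_congr rfl hzero, Finset.sum_const, smul_zero] at key
  exact key.symm

end Binom

/-- Suppose there is a symmetrizing form `τ` on `B = End_A(⊕_{λ∈Λ₀} P^λ)` with
`τ(θ_λ) = 1` for all `λ ∈ Λ₀` (here `λ' = λ`, so `θ_λ : P^λ → P^λ` has image `soc(P^λ)`).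
Then for any nonzero `f ∈ Hom_A(P^λ, P^μ)` with `λ, μ ∈ Λ₀` there exists
`g ∈ Hom_A(P^μ, P^λ)` with `f ∘ g = θ_μ` and `g ∘ f = θ_λ`. -/
theorem stmt_4
    (K A : Type) [Field K] [IsAlgClosed K] [Ring A] [Algebra K A] [FiniteDimensional K A]
    (Lam : Type) [DecidableEq Lam] (L P : Lam → Type)
    [∀ l, AddCommGroup (L l)] [∀ l, Module A (L l)] [∀ l, Module K (L l)]
    [∀ l, IsScalarTower K A (L l)] [∀ l, FiniteDimensional K (L l)]
    [∀ l, AddCommGroup (P l)] [∀ l, Module A (P l)] [∀ l, Module K (P l)]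
    [∀ l, IsScalarTower K A (P l)] [∀ l, SMulCommClass A K (P l)]
    [∀ l, FiniteDimensional K (P l)]
    (hsimple : ∀ l, IsSimpleModule A (L l))
    (hdistinct : ∀ l m, Nonempty (L l ≃ₗ[A] L m) → l = m)
    (hproj : ∀ l, Module.Projective A (P l))
    (hcover : ∀ l, ∃ π : P l →ₗ[A] L l, Function.Surjective π ∧ LinearMap.ker π = Rad A (P l))
    -- λ' = λ on Λ₀: soc(P^λ) ≅ L^λ for λ ∈ Λ₀
    (hsoc : ∀ l, Module.Injective A (P l) → Nonempty (↥(Socle A (P l)) ≃ₗ[A] L l))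
    -- the fixed maps θ_λ : P^λ → P^λ with image soc(P^λ)
    (θ : ∀ s : {l : Lam // Module.Injective A (P l)}, P s.1 →ₗ[A] P s.1)
    (hθ : ∀ s, LinearMap.range (θ s) = Socle A (P s.1))
    -- a symmetrizing form τ on B with τ(θ_λ) = 1 for all λ ∈ Λ₀
    (τ : Module.End A (DirectSum {l : Lam // Module.Injective A (P l)} (fun s => P s.1)) →ₗ[K] K)
    (hsymm : ∀ x y, τ (x * y) = τ (y * x))
    (hnd : ∀ x, x ≠ 0 → ∃ y, τ (x * y) ≠ 0)
    (hτθ : ∀ s, τ (emb A {l : Lam // Module.Injective A (P l)} (fun s => P s.1) s s (θ s)) = 1)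
    (s t : {l : Lam // Module.Injective A (P l)})
    (f : P s.1 →ₗ[A] P t.1) (hf : f ≠ 0) :
    ∃ g : P t.1 →ₗ[A] P s.1, f.comp g = θ t ∧ g.comp f = θ s := by
  classical
  -- basic module facts
  haveI : ∀ l, Nontrivial (P l) := by
    intro l
    obtain ⟨π, hπs, -⟩ := hcover l
    haveI := hsimple l
    haveI : Nontrivial (L l) := IsSimpleModule.nontrivial A (L l)
    obtain ⟨u, v, huv⟩ := exists_pair_ne (L l)
    obtain ⟨u', hu'⟩ := hπs u
    obtain ⟨v', hv'⟩ := hπs v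
    exact ⟨u', v', fun h => huv (by rw [← hu', ← hv', h])⟩
  have hcoatom : ∀ l, IsCoatom (Rad A (P l)) := by
    intro l
    obtain ⟨π, hπs, hπk⟩ := hcover l
    haveI := hsimple l
    exact stmt4_rad_coatom K π hπs hπk
  have hrangesimple : ∀ r : {l : Lam // Module.Injective A (P l)}, IsSimpleModule A ↥(LinearMap.range (θ r)) := by
    intro r
    haveI := hsimple r.1
    exact IsSimpleModule.congr ((LinearEquiv.ofEq _ _ (hθ r)).trans (hsoc r.1 r.2).some)
  have hkerθ : ∀ r : {l : Lam // Module.Injective A (P l)}, LinearMap.ker (θ r) = Rad A (P r.1) :=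
    fun r => stmt4_ker_theta_eq_rad K (hcoatom r.1) (θ r) (hrangesimple r)
  -- θ kills non-surjective maps from the right
  have hθj : ∀ (r : {l : Lam // Module.Injective A (P l)}) (j : Module.End A (P r.1)), ¬ Function.Surjective j →
      (θ r) ∘ₗ j = 0 :=
    fun r j hj => stmt4_theta_comp_eq_zero K (hcoatom r.1) (θ r) (hkerθ r) j hj
  -- finite dimensionality of hom spaces
  haveI hfdTT : FiniteDimensional K (Module.End A (P t.1)) := stmt4_findim_hom K
  haveI hfdSS : FiniteDimensional K (Module.End A (P s.1)) := stmt4_findim_hom K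
  haveI hfdTS : FiniteDimensional K (P t.1 →ₗ[A] P s.1) := stmt4_findim_hom K
  -- the map Φ : g ↦ (f∘g, g∘f)
  let W := Module.End A (P t.1) × Module.End A (P s.1)
  haveI : FiniteDimensional K W := inferInstance
  let Φ : (P t.1 →ₗ[A] P s.1) →ₗ[K] W :=
    { toFun := fun g => (f ∘ₗ g, g ∘ₗ f)
      map_add' := fun g h => by
        simp only [LinearMap.comp_add, LinearMap.add_comp]
        rfl
      map_smul' := fun c g => by
        have h1 : f ∘ₗ (c • g) = c • (f ∘ₗ g) := stmt4_comp_ksmul f c g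
        simp only [RingHom.id_apply, h1, LinearMap.smul_comp]
        rfl }
  -- the pairing maps
  let pt : Module.End A (P t.1) →ₗ[K] Module.Dual K (Module.End A (P t.1)) :=
    LinearMap.mk₂ K (fun y a => τ (emb A _ _ t t (a ∘ₗ y)))
      (fun y₁ y₂ a => by
        show τ (emb A _ _ t t (a ∘ₗ (y₁ + y₂)))
          = τ (emb A _ _ t t (a ∘ₗ y₁)) + τ (emb A _ _ t t (a ∘ₗ y₂))
        rw [← map_add, ← stmt4_emb_add, ← LinearMap.comp_add])
      (fun c y a => by
        show τ (emb A _ _ t t (a ∘ₗ (c • y))) = c • τ (emb A _ _ t t (a ∘ₗ y))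
        rw [stmt4_comp_ksmul a c y, stmt4_emb_smul, map_smul])
      (fun y a₁ a₂ => by
        show τ (emb A _ _ t t ((a₁ + a₂) ∘ₗ y))
          = τ (emb A _ _ t t (a₁ ∘ₗ y)) + τ (emb A _ _ t t (a₂ ∘ₗ y))
        rw [← map_add, ← stmt4_emb_add, ← LinearMap.add_comp])
      (fun c y a => by
        show τ (emb A _ _ t t ((c • a) ∘ₗ y)) = c • τ (emb A _ _ t t (a ∘ₗ y))
        rw [LinearMap.smul_comp, stmt4_emb_smul, map_smul])
  let ps : Module.End A (P s.1) →ₗ[K] Module.Dual K (Module.End A (P s.1)) :=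
    LinearMap.mk₂ K (fun y a => τ (emb A _ _ s s (a ∘ₗ y)))
      (fun y₁ y₂ a => by
        show τ (emb A _ _ s s (a ∘ₗ (y₁ + y₂)))
          = τ (emb A _ _ s s (a ∘ₗ y₁)) + τ (emb A _ _ s s (a ∘ₗ y₂))
        rw [← map_add, ← stmt4_emb_add, ← LinearMap.comp_add])
      (fun c y a => by
        show τ (emb A _ _ s s (a ∘ₗ (c • y))) = c • τ (emb A _ _ s s (a ∘ₗ y))
        rw [stmt4_comp_ksmul a c y, stmt4_emb_smul, map_smul])
      (fun y a₁ a₂ => by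
        show τ (emb A _ _ s s ((a₁ + a₂) ∘ₗ y))
          = τ (emb A _ _ s s (a₁ ∘ₗ y)) + τ (emb A _ _ s s (a₂ ∘ₗ y))
        rw [← map_add, ← stmt4_emb_add, ← LinearMap.add_comp])
      (fun c y a => by
        show τ (emb A _ _ s s ((c • a) ∘ₗ y)) = c • τ (emb A _ _ s s (a ∘ₗ y))
        rw [LinearMap.smul_comp, stmt4_emb_smul, map_smul])
  let ρ : W →ₗ[K] Module.Dual K W :=
    { toFun := fun w => (pt w.1).coprod (ps w.2)
      map_add' := fun w₁ w₂ => by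
        obtain ⟨y1, x1⟩ := w₁
        obtain ⟨y2, x2⟩ := w₂
        apply LinearMap.ext
        rintro ⟨a1, b1⟩
        show pt (y1 + y2) a1 + ps (x1 + x2) b1
          = pt y1 a1 + ps x1 b1 + (pt y2 a1 + ps x2 b1)
        rw [map_add, map_add, LinearMap.add_apply, LinearMap.add_apply]
        ring
      map_smul' := fun c w => by
        obtain ⟨y1, x1⟩ := w
        apply LinearMap.ext
        rintro ⟨a1, b1⟩
        show pt (c • y1) a1 + ps (c • x1) b1 = c • (pt y1 a1 + ps x1 b1)
        rw [map_smul, map_smul, LinearMap.smul_apply, LinearMap.smul_apply, smul_eq_mul,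
          smul_eq_mul, smul_eq_mul]
        ring }
  -- ρ is injective
  have hρinj : Function.Injective ρ := by
    rw [injective_iff_map_eq_zero]
    rintro ⟨y, x⟩ h
    have hy : y = 0 := by
      by_contra hy
      obtain ⟨v, hv⟩ := stmt4_tau_nondeg τ hsymm hnd t t y hy
      apply hv
      rw [stmt4_tau_cyclic τ hsymm t t y v]
      have h2 : (ρ (y, x)) (v, (0 : Module.End A (P s.1))) = 0 := by rw [h]; rfl
      have h3 : τ (emb A _ _ t t (v ∘ₗ y))
          + τ (emb A _ _ s s ((0 : Module.End A (P s.1)) ∘ₗ x)) = 0 := h2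
      rwa [LinearMap.zero_comp, stmt4_emb_zero, map_zero, add_zero] at h3
    have hx : x = 0 := by
      by_contra hx
      obtain ⟨v, hv⟩ := stmt4_tau_nondeg τ hsymm hnd s s x hx
      apply hv
      rw [stmt4_tau_cyclic τ hsymm s s x v]
      have h2 : (ρ (y, x)) (((0 : Module.End A (P t.1)), v)) = 0 := by rw [h]; rfl
      have h3 : τ (emb A _ _ t t ((0 : Module.End A (P t.1)) ∘ₗ y))
          + τ (emb A _ _ s s (v ∘ₗ x)) = 0 := h2
      rwa [LinearMap.zero_comp, stmt4_emb_zero, map_zero, zero_add] at h3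
    rw [hy, hx]; rfl
  -- ρ is surjective
  have hρsurj : Function.Surjective ρ := by
    have h1 : Module.finrank K (LinearMap.range ρ) = Module.finrank K (Module.Dual K W) := by
      rw [LinearMap.finrank_range_of_inj hρinj, Subspace.dual_finrank_eq]
    rw [← LinearMap.range_eq_top]
    exact Submodule.eq_top_of_finrank_eq h1
  -- main claim: (θ t, θ s) ∈ range Φ
  have hmem : (θ t, θ s) ∈ LinearMap.range Φ := by
    by_contra hw
    set U := LinearMap.range Φ with hU
    have hq : U.mkQ (θ t, θ s) ≠ 0 := by
      rw [Submodule.mkQ_apply, Ne, Submodule.Quotient.mk_eq_zero]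
      exact hw
    have hφex : ¬ ∀ φ : Module.Dual K (W ⧸ U), φ (U.mkQ (θ t, θ s)) = 0 := by
      rw [Module.forall_dual_apply_eq_zero_iff]
      exact hq
    push_neg at hφex
    obtain ⟨φ, hφ⟩ := hφex
    obtain ⟨⟨y, x⟩, hyx⟩ := hρsurj (φ ∘ₗ U.mkQ)
    -- vanishing on the range of Φ
    have hvanish : ∀ g : P t.1 →ₗ[A] P s.1,
        τ (emb A _ _ t t ((f ∘ₗ g) ∘ₗ y)) + τ (emb A _ _ s s ((g ∘ₗ f) ∘ₗ x)) = 0 := by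
      intro g
      have h1 : (φ ∘ₗ U.mkQ) (Φ g) = 0 := by
        have : U.mkQ (Φ g) = 0 := by
          rw [Submodule.mkQ_apply, Submodule.Quotient.mk_eq_zero]
          exact LinearMap.mem_range_self Φ g
        simp [LinearMap.comp_apply, this]
      rw [← hyx] at h1
      exact h1
    -- deduce y ∘ f + f ∘ x = 0
    have hu : y ∘ₗ f + f ∘ₗ x = 0 := by
      by_contra hne
      obtain ⟨v, hv⟩ := stmt4_tau_nondeg τ hsymm hnd s t (y ∘ₗ f + f ∘ₗ x) hne
      apply hv
      rw [stmt4_tau_cyclic τ hsymm s t _ v]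
      have h2 := hvanish v
      have e1 : (f ∘ₗ v) ∘ₗ y = f ∘ₗ (v ∘ₗ y) := by rw [LinearMap.comp_assoc]
      have e2 : τ (emb A _ _ t t (f ∘ₗ (v ∘ₗ y))) = τ (emb A _ _ s s ((v ∘ₗ y) ∘ₗ f)) :=
        stmt4_tau_cyclic τ hsymm s t f (v ∘ₗ y)
      rw [e1, e2] at h2
      have e3 : (v ∘ₗ y) ∘ₗ f = v ∘ₗ (y ∘ₗ f) := by rw [LinearMap.comp_assoc]
      have e4 : (v ∘ₗ f) ∘ₗ x = v ∘ₗ (f ∘ₗ x) := by rw [LinearMap.comp_assoc]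
      rw [e3, e4, ← map_add, ← stmt4_emb_add, ← LinearMap.comp_add] at h2
      exact h2
    -- scalar parts
    obtain ⟨cy, hcy⟩ := stmt4_exists_scalar_part K (M := P t.1) y
    obtain ⟨cx, hcx⟩ := stmt4_exists_scalar_part K (M := P s.1) x
    -- cy + cx = 0
    have hcsum : cy + cx = 0 := by
      by_contra hc
      set c := cy + cx with hcdef
      have e1 : (y - cy • (1 : Module.End A (P t.1))) ∘ₗ f = y ∘ₗ f - cy • f := by
        ext v
        simp only [LinearMap.comp_apply, LinearMap.sub_apply, LinearMap.smul_apply,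
          Module.End.one_apply]
      have e2 : f ∘ₗ (x - cx • (1 : Module.End A (P s.1))) = f ∘ₗ x - cx • f := by
        ext v
        simp only [LinearMap.comp_apply, LinearMap.sub_apply, LinearMap.smul_apply,
          Module.End.one_apply, map_sub]
        rw [stmt4_asmul f cx v]
      have hrel : f = ((-c⁻¹) • (y - cy • 1)) ∘ₗ f + f ∘ₗ ((-c⁻¹) • (x - cx • 1)) := by
        rw [LinearMap.smul_comp, stmt4_comp_ksmul f (-c⁻¹) (x - cx • 1), ← smul_add]
        have h3 : (y - cy • 1) ∘ₗ f + f ∘ₗ (x - cx • 1) = -(c • f) := by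
          rw [e1, e2]
          have h4 : y ∘ₗ f - cy • f + (f ∘ₗ x - cx • f)
              = (y ∘ₗ f + f ∘ₗ x) - (cy • f + cx • f) := by abel
          rw [h4, hu, zero_sub, hcdef, add_smul]
        rw [h3, smul_neg, neg_smul, neg_neg, smul_smul, inv_mul_cancel₀ hc, one_smul]
      have hnsa : ¬ Function.Surjective ⇑((-c⁻¹) • (y - cy • 1) : Module.End A (P t.1)) := by
        intro hsurj
        apply hcy
        intro v
        obtain ⟨w, hw⟩ := hsurj ((-c⁻¹) • v)
        refine ⟨w, ?_⟩
        have : (-c⁻¹) • ((y - cy • 1) w) = (-c⁻¹) • v := hw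
        exact smul_right_injective _ (neg_ne_zero.mpr (inv_ne_zero hc)) this
      have hnsb : ¬ Function.Surjective ⇑((-c⁻¹) • (x - cx • 1) : Module.End A (P s.1)) := by
        intro hsurj
        apply hcx
        intro v
        obtain ⟨w, hw⟩ := hsurj ((-c⁻¹) • v)
        refine ⟨w, ?_⟩
        have : (-c⁻¹) • ((x - cx • 1) w) = (-c⁻¹) • v := hw
        exact smul_right_injective _ (neg_ne_zero.mpr (inv_ne_zero hc)) this
      obtain ⟨p, hp⟩ := stmt4_nilpotent_of_not_surj K (hcoatom t.1) _ hnsa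
      obtain ⟨q, hq⟩ := stmt4_nilpotent_of_not_surj K (hcoatom s.1) _ hnsb
      exact hf (stmt4_eq_zero_of_sandwich K _ _ f hrel p q hp hq)
    -- evaluate ψ at (θ t, θ s)
    have heval : (φ ∘ₗ U.mkQ) (θ t, θ s) = cy + cx := by
      rw [← hyx]
      have h4 : τ (emb A _ _ t t ((θ t) ∘ₗ y)) = cy := by
        have hdec : (θ t) ∘ₗ y = cy • (θ t) + (θ t) ∘ₗ (y - cy • 1) := by
          have hy' : y = cy • (1 : Module.End A (P t.1)) + (y - cy • 1) := by abel
          conv_lhs => rw [hy']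
          rw [LinearMap.comp_add, stmt4_comp_ksmul (θ t) cy (1 : Module.End A (P t.1)),
            Module.End.one_eq_id, LinearMap.comp_id]
        rw [hdec, hθj t _ hcy, add_zero, stmt4_emb_smul, map_smul, hτθ t, smul_eq_mul, mul_one]
      have h5 : τ (emb A _ _ s s ((θ s) ∘ₗ x)) = cx := by
        have hdec : (θ s) ∘ₗ x = cx • (θ s) + (θ s) ∘ₗ (x - cx • 1) := by
          have hx' : x = cx • (1 : Module.End A (P s.1)) + (x - cx • 1) := by abel
          conv_lhs => rw [hx']
          rw [LinearMap.comp_add, stmt4_comp_ksmul (θ s) cx (1 : Module.End A (P s.1)),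
            Module.End.one_eq_id, LinearMap.comp_id]
        rw [hdec, hθj s _ hcx, add_zero, stmt4_emb_smul, map_smul, hτθ s, smul_eq_mul, mul_one]
      show τ (emb A _ _ t t ((θ t) ∘ₗ y)) + τ (emb A _ _ s s ((θ s) ∘ₗ x)) = cy + cx
      rw [h4, h5]
    rw [hcsum] at heval
    exact hφ heval
  obtain ⟨g, hg⟩ := hmem
  refine ⟨g, ?_, ?_⟩
  · exact congrArg Prod.fst hg
  · exact congrArg Prod.snd hg
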